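/- For every Laurent polynomial f ∈ ℤ[t,t⁻¹] with f(1) = 0 and f'(1) = 0, there exists a finite signed directed multigraph Γ (a disjoint union of the intersection graphs Γ(L_k), Γ(L_k^{-1}), Γ(R_k), Γ(R_k^{-1})) with P_Γ(t) = f(t), where P_Γ(t) = ∑_v w(v) t^{Ind(v)} − ∑_v w(v). -/

import Mathlib

open Finset LaurentPolynomial

/-- A finite directed multigraph with vertex signs `w : V → {+1, −1}`. -/
structure SDGraph where
  V : Type
  [instFintypeV : Fintype V]
  [instDecEqV : DecidableEq V]
  E : Type
  [instFintypeE : Fintype E]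
  src : E → V
  tgt : E → V
  w : V → ℤ
  sign : ∀ v, w v = 1 ∨ w v = -1

attribute [instance] SDGraph.instFintypeV SDGraph.instDecEqV SDGraph.instFintypeE

/-- The index of a vertex:
`Ind(v) = ∑_{edges u→v} w(u) − ∑_{edges v→u} w(u)` (sums over edges, with multiplicity). -/
def SDGraph.Ind (G : SDGraph) (v : G.V) : ℤ :=
  (∑ e ∈ univ.filter (fun e => G.tgt e = v), G.w (G.src e))
    - (∑ e ∈ univ.filter (fun e => G.src e = v), G.w (G.tgt e))

/-- The graph polynomial `P_Γ(t) = ∑_v w(v) t^{Ind(v)} − ∑_v w(v)`. -/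
noncomputable def SDGraph.P (G : SDGraph) : LaurentPolynomial ℤ :=
  (∑ v, C (G.w v) * T (G.Ind v)) - C (∑ v, G.w v)

/-- Evaluation of a Laurent polynomial at `t = 1` (the sum of its coefficients). -/
def evalOne (f : LaurentPolynomial ℤ) : ℤ := f.coeff.sum fun _ a => a

/-- Evaluation of the formal derivative of a Laurent polynomial at `t = 1`. -/
def derivOne (f : LaurentPolynomial ℤ) : ℤ := f.coeff.sum fun n a => n * a

/-- The empty graph. -/
def SDGraph.empty : SDGraph where
  V := Empty
  E := Empty
  src := Empty.elim
  tgt := Empty.elim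
  w := Empty.elim
  sign v := v.elim

/-- The disjoint union of two signed directed multigraphs. -/
def SDGraph.disjUnion (G H : SDGraph) : SDGraph where
  V := G.V ⊕ H.V
  E := G.E ⊕ H.E
  src := Sum.map G.src H.src
  tgt := Sum.map G.tgt H.tgt
  w := Sum.elim G.w H.w
  sign v := Sum.rec (fun a => G.sign a) (fun b => H.sign b) v

/-- `Γ(L_k)`: a star with central vertex `0` of sign `+1` and `k` leaves of sign `+1`,
each joined to the centre by an edge directed from the leaf to the centre. -/
def GammaL (k : ℕ) : SDGraph where
  V := Fin (k + 1)
  E := Fin k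
  src e := e.succ
  tgt _ := 0
  w _ := 1
  sign _ := Or.inl rfl

/-- `Γ(L_k⁻¹)`: the star `Γ(L_k)` with all edge directions reversed. -/
def GammaLinv (k : ℕ) : SDGraph where
  V := Fin (k + 1)
  E := Fin k
  src _ := 0
  tgt e := e.succ
  w _ := 1
  sign _ := Or.inl rfl

/-- `Γ(R_k)`: the star `Γ(L_k)` with all signs flipped. -/
def GammaR (k : ℕ) : SDGraph where
  V := Fin (k + 1)
  E := Fin k
  src e := e.succ
  tgt _ := 0
  w _ := -1
  sign _ := Or.inr rfl

/-- `Γ(R_k⁻¹)`: the star `Γ(L_k)` with all edge directions reversed and all signs flipped. -/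
def GammaRinv (k : ℕ) : SDGraph where
  V := Fin (k + 1)
  E := Fin k
  src _ := 0
  tgt e := e.succ
  w _ := -1
  sign _ := Or.inr rfl


-- ===================== Auxiliary development =====================
section Aux
open Finsupp

/-! ### Graph polynomial lemmas -/

lemma P_empty : SDGraph.empty.P = 0 := by
  have : IsEmpty SDGraph.empty.V := inferInstanceAs (IsEmpty Empty)
  simp [SDGraph.P]

lemma Ind_disjUnion_inl (G H : SDGraph) (v : G.V) :
    (G.disjUnion H).Ind (Sum.inl v) = G.Ind v := by
  have key : ∀ F : (G.disjUnion H).E → ℤ,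
      ∑ e, F e = ∑ e : G.E, F (Sum.inl e) + ∑ e : H.E, F (Sum.inr e) :=
    fun F => Fintype.sum_sum_type F
  simp only [SDGraph.Ind, Finset.sum_filter]
  rw [key, key]
  simp [SDGraph.disjUnion]

lemma Ind_disjUnion_inr (G H : SDGraph) (v : H.V) :
    (G.disjUnion H).Ind (Sum.inr v) = H.Ind v := by
  have key : ∀ F : (G.disjUnion H).E → ℤ,
      ∑ e, F e = ∑ e : G.E, F (Sum.inl e) + ∑ e : H.E, F (Sum.inr e) :=
    fun F => Fintype.sum_sum_type F
  simp only [SDGraph.Ind, Finset.sum_filter]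
  rw [key, key]
  simp [SDGraph.disjUnion]

lemma w_disjUnion_inl (G H : SDGraph) (v : G.V) :
    (G.disjUnion H).w (Sum.inl v) = G.w v := rfl

lemma w_disjUnion_inr (G H : SDGraph) (v : H.V) :
    (G.disjUnion H).w (Sum.inr v) = H.w v := rfl

lemma P_disjUnion (G H : SDGraph) : (G.disjUnion H).P = G.P + H.P := by
  have key : ∀ (F : (G.disjUnion H).V → LaurentPolynomial ℤ),
      (∑ v, F v) = (∑ v : G.V, F (Sum.inl v)) + ∑ v : H.V, F (Sum.inr v) :=
    fun F => Fintype.sum_sum_type F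
  have keyZ : ∀ (F : (G.disjUnion H).V → ℤ),
      (∑ v, F v) = (∑ v : G.V, F (Sum.inl v)) + ∑ v : H.V, F (Sum.inr v) :=
    fun F => Fintype.sum_sum_type F
  simp only [SDGraph.P, key, keyZ, Ind_disjUnion_inl, Ind_disjUnion_inr,
    w_disjUnion_inl, w_disjUnion_inr, map_add]
  ring

/-! ### The star graphs' polynomials -/

lemma Ind_GammaL_zero (k : ℕ) : (GammaL k).Ind (0 : Fin (k+1)) = k := by
  simp only [SDGraph.Ind, GammaL]
  simp [Fin.succ_ne_zero]
  exact Finset.card_fin k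

lemma Ind_GammaL_succ (k : ℕ) (j : Fin k) : (GammaL k).Ind j.succ = -1 := by
  simp only [SDGraph.Ind, GammaL]
  erw [Finset.filter_false_of_mem (fun e _ => (Fin.succ_ne_zero j).symm)]
  have : (univ.filter (fun e : Fin k => e.succ = j.succ)) = {j} := by
    ext e; simp [Fin.succ_inj]
  erw [this]
  simp

lemma P_GammaL (k : ℕ) : (GammaL k).P = T (k:ℤ) + C (k:ℤ) * T (-1) - C ((k:ℤ)+1) := by
  have key : ∀ (F : (GammaL k).V → LaurentPolynomial ℤ),
      (∑ v, F v) = F (0 : Fin (k+1)) + ∑ j : Fin k, F (Fin.succ j) :=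
    fun F => Fin.sum_univ_succ F
  have keyZ : ∀ (F : (GammaL k).V → ℤ),
      (∑ v, F v) = F (0 : Fin (k+1)) + ∑ j : Fin k, F (Fin.succ j) :=
    fun F => Fin.sum_univ_succ F
  have hw : ∀ v : Fin (k+1), (GammaL k).w v = 1 := fun _ => rfl
  simp only [SDGraph.P, key, keyZ, hw, Ind_GammaL_zero, Ind_GammaL_succ, map_one, one_mul,
    Finset.sum_const, Finset.card_univ, Fintype.card_fin, nsmul_eq_mul, mul_one]
  simp only [map_natCast, map_add, map_one]
  ring

lemma Ind_GammaLinv_zero (k : ℕ) : (GammaLinv k).Ind (0 : Fin (k+1)) = -k := by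
  simp only [SDGraph.Ind, GammaLinv]
  simp [Fin.succ_ne_zero]
  exact Finset.card_fin k

lemma Ind_GammaLinv_succ (k : ℕ) (j : Fin k) : (GammaLinv k).Ind j.succ = 1 := by
  simp only [SDGraph.Ind, GammaLinv]
  erw [Finset.filter_false_of_mem (α := Fin k) (fun e _ => (Fin.succ_ne_zero j).symm)]
  have : (univ.filter (fun e : Fin k => e.succ = j.succ)) = {j} := by
    ext e; simp [Fin.succ_inj]
  erw [this]
  simp

lemma P_GammaLinv (k : ℕ) :
    (GammaLinv k).P = T (-(k:ℤ)) + C (k:ℤ) * T 1 - C ((k:ℤ)+1) := by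
  have key : ∀ (F : (GammaLinv k).V → LaurentPolynomial ℤ),
      (∑ v, F v) = F (0 : Fin (k+1)) + ∑ j : Fin k, F (Fin.succ j) :=
    fun F => Fin.sum_univ_succ F
  have keyZ : ∀ (F : (GammaLinv k).V → ℤ),
      (∑ v, F v) = F (0 : Fin (k+1)) + ∑ j : Fin k, F (Fin.succ j) :=
    fun F => Fin.sum_univ_succ F
  have hw : ∀ v : Fin (k+1), (GammaLinv k).w v = 1 := fun _ => rfl
  simp only [SDGraph.P, key, keyZ, hw, Ind_GammaLinv_zero, Ind_GammaLinv_succ, map_one, one_mul,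
    Finset.sum_const, Finset.card_univ, Fintype.card_fin, nsmul_eq_mul, mul_one]
  simp only [map_natCast, map_add, map_one]
  ring

lemma Ind_GammaR_zero (k : ℕ) : (GammaR k).Ind (0 : Fin (k+1)) = -k := by
  simp only [SDGraph.Ind, GammaR]
  simp [Fin.succ_ne_zero]
  exact Finset.card_fin k

lemma Ind_GammaR_succ (k : ℕ) (j : Fin k) : (GammaR k).Ind j.succ = 1 := by
  simp only [SDGraph.Ind, GammaR]
  erw [Finset.filter_false_of_mem (α := Fin k) (fun e _ => (Fin.succ_ne_zero j).symm)]
  have : (univ.filter (fun e : Fin k => e.succ = j.succ)) = {j} := by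
    ext e; simp [Fin.succ_inj]
  erw [this]
  simp

lemma P_GammaR (k : ℕ) :
    (GammaR k).P = -(T (-(k:ℤ)) + C (k:ℤ) * T 1 - C ((k:ℤ)+1)) := by
  have key : ∀ (F : (GammaR k).V → LaurentPolynomial ℤ),
      (∑ v, F v) = F (0 : Fin (k+1)) + ∑ j : Fin k, F (Fin.succ j) :=
    fun F => Fin.sum_univ_succ F
  have keyZ : ∀ (F : (GammaR k).V → ℤ),
      (∑ v, F v) = F (0 : Fin (k+1)) + ∑ j : Fin k, F (Fin.succ j) :=
    fun F => Fin.sum_univ_succ F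
  have hw : ∀ v : Fin (k+1), (GammaR k).w v = -1 := fun _ => rfl
  simp only [SDGraph.P, key, keyZ, hw, Ind_GammaR_zero, Ind_GammaR_succ, map_neg, map_one,
    neg_mul, one_mul, Finset.sum_const, Finset.card_univ, Fintype.card_fin, nsmul_eq_mul,
    mul_one]
  simp only [mul_neg_one, map_neg, map_natCast, map_add, map_one, mul_one]
  ring

lemma Ind_GammaRinv_zero (k : ℕ) : (GammaRinv k).Ind (0 : Fin (k+1)) = k := by
  simp only [SDGraph.Ind, GammaRinv]
  simp [Fin.succ_ne_zero]
  exact Finset.card_fin k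

lemma Ind_GammaRinv_succ (k : ℕ) (j : Fin k) : (GammaRinv k).Ind j.succ = -1 := by
  simp only [SDGraph.Ind, GammaRinv]
  erw [Finset.filter_false_of_mem (α := Fin k) (fun e _ => (Fin.succ_ne_zero j).symm)]
  have : (univ.filter (fun e : Fin k => e.succ = j.succ)) = {j} := by
    ext e; simp [Fin.succ_inj]
  erw [this]
  simp

lemma P_GammaRinv (k : ℕ) :
    (GammaRinv k).P = -(T (k:ℤ) + C (k:ℤ) * T (-1) - C ((k:ℤ)+1)) := by
  have key : ∀ (F : (GammaRinv k).V → LaurentPolynomial ℤ),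
      (∑ v, F v) = F (0 : Fin (k+1)) + ∑ j : Fin k, F (Fin.succ j) :=
    fun F => Fin.sum_univ_succ F
  have keyZ : ∀ (F : (GammaRinv k).V → ℤ),
      (∑ v, F v) = F (0 : Fin (k+1)) + ∑ j : Fin k, F (Fin.succ j) :=
    fun F => Fin.sum_univ_succ F
  have hw : ∀ v : Fin (k+1), (GammaRinv k).w v = -1 := fun _ => rfl
  simp only [SDGraph.P, key, keyZ, hw, Ind_GammaRinv_zero, Ind_GammaRinv_succ, map_neg, map_one,
    neg_mul, one_mul, Finset.sum_const, Finset.card_univ, Fintype.card_fin, nsmul_eq_mul,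
    mul_one]
  simp only [mul_neg_one, map_neg, map_natCast, map_add, map_one, mul_one]
  ring

/-! ### Realizability -/

def IsStar (Γ : SDGraph) : Prop :=
  ∃ k : ℕ, Γ = GammaL k ∨ Γ = GammaLinv k ∨ Γ = GammaR k ∨ Γ = GammaRinv k

def Realizable (g : LaurentPolynomial ℤ) : Prop :=
  ∃ l : List SDGraph, (∀ Γ ∈ l, IsStar Γ) ∧
    (l.foldr SDGraph.disjUnion SDGraph.empty).P = g

lemma realizable_zero : Realizable 0 :=
  ⟨[], by simp, by simpa using P_empty⟩

lemma P_foldr_append (l₁ l₂ : List SDGraph) :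
    ((l₁ ++ l₂).foldr SDGraph.disjUnion SDGraph.empty).P
      = (l₁.foldr SDGraph.disjUnion SDGraph.empty).P
        + (l₂.foldr SDGraph.disjUnion SDGraph.empty).P := by
  induction l₁ with
  | nil => simp [P_empty]
  | cons a l ih =>
      simp only [List.cons_append, List.foldr_cons, P_disjUnion, ih]
      ring

lemma Realizable.add {g h : LaurentPolynomial ℤ} (hg : Realizable g) (hh : Realizable h) :
    Realizable (g + h) := by
  obtain ⟨l₁, hs₁, hp₁⟩ := hg
  obtain ⟨l₂, hs₂, hp₂⟩ := hh
  exact ⟨l₁ ++ l₂, fun Γ hΓ => ((List.mem_append.1 hΓ).elim (hs₁ Γ) (hs₂ Γ)),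
    by rw [P_foldr_append, hp₁, hp₂]⟩

lemma realizable_star (Γ : SDGraph) (h : IsStar Γ) : Realizable Γ.P :=
  ⟨[Γ], by simpa using h, by simp [P_disjUnion, P_empty]⟩

/-! ### The building-block Laurent polynomials -/

noncomputable def Q (n : ℤ) : LaurentPolynomial ℤ :=
  if 0 ≤ n then T n + C n * T (-1) - C (n+1) else T n + C (-n) * T 1 - C (1-n)

lemma realizable_Q (n : ℤ) : Realizable (Q n) := by
  rcases le_or_gt 0 n with h | h
  · obtain ⟨k, rfl⟩ := Int.eq_ofNat_of_zero_le h
    have := realizable_star (GammaL k) ⟨k, Or.inl rfl⟩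
    rw [P_GammaL] at this
    simpa [Q, if_pos h] using this
  · set k := (-n).toNat with hk
    have hkn : (k : ℤ) = -n := Int.toNat_of_nonneg (by omega)
    have := realizable_star (GammaLinv k) ⟨k, Or.inr (Or.inl rfl)⟩
    rw [P_GammaLinv, hkn] at this
    have e : (1 : ℤ) - n = -n + 1 := by ring
    simpa [Q, if_neg (not_le.2 h), neg_neg, e] using this

lemma realizable_negQ (n : ℤ) : Realizable (-Q n) := by
  rcases le_or_gt 0 n with h | h
  · obtain ⟨k, rfl⟩ := Int.eq_ofNat_of_zero_le h
    have := realizable_star (GammaRinv k) ⟨k, Or.inr (Or.inr (Or.inr rfl))⟩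
    rw [P_GammaRinv] at this
    simpa [Q, if_pos h] using this
  · set k := (-n).toNat with hk
    have hkn : (k : ℤ) = -n := Int.toNat_of_nonneg (by omega)
    have := realizable_star (GammaR k) ⟨k, Or.inr (Or.inr (Or.inl rfl))⟩
    rw [P_GammaR, hkn] at this
    have e : (1 : ℤ) - n = -n + 1 := by ring
    simpa [Q, if_neg (not_le.2 h), neg_neg, e] using this

lemma realizable_zsmul_Q (n z : ℤ) : Realizable (z • Q n) := by
  induction z using Int.induction_on with
  | zero => simpa using realizable_zero
  | succ i ih =>
      have : ((i : ℤ) + 1) • Q n = (i : ℤ) • Q n + Q n := by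
        rw [add_smul, one_smul]
      rw [this]
      exact ih.add (realizable_Q n)
  | pred i ih =>
      have : (-(i : ℤ) - 1) • Q n = (-(i : ℤ)) • Q n + -Q n := by
        rw [sub_smul, one_smul, sub_eq_add_neg]
      rw [this]
      exact ih.add (realizable_negQ n)

lemma realizable_sum (s : Finset ℤ) (F : ℤ → LaurentPolynomial ℤ)
    (h : ∀ n ∈ s, Realizable (F n)) : Realizable (∑ n ∈ s, F n) :=
  Finset.sum_induction F Realizable (fun _ _ ha hb => ha.add hb) realizable_zero h

/-! ### `evalOne` and `derivOne` as additive maps -/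

noncomputable def evalOneHom : LaurentPolynomial ℤ →+ ℤ :=
  (Finsupp.liftAddHom (fun _ => AddMonoidHom.id ℤ)).comp
    (AddMonoidAlgebra.coeffAddEquiv : LaurentPolynomial ℤ ≃+ (ℤ →₀ ℤ)).toAddMonoidHom

lemma evalOne_eq (f : LaurentPolynomial ℤ) : evalOne f = evalOneHom f := rfl

noncomputable def derivOneHom : LaurentPolynomial ℤ →+ ℤ :=
  (Finsupp.liftAddHom (fun n => AddMonoidHom.mulLeft (n : ℤ))).comp
    (AddMonoidAlgebra.coeffAddEquiv : LaurentPolynomial ℤ ≃+ (ℤ →₀ ℤ)).toAddMonoidHom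

lemma derivOne_eq (f : LaurentPolynomial ℤ) : derivOne f = derivOneHom f := rfl

lemma evalOneHom_single (n a : ℤ) : evalOneHom (AddMonoidAlgebra.single n a) = a :=
  Finsupp.sum_single_index rfl

lemma derivOneHom_single (n a : ℤ) : derivOneHom (AddMonoidAlgebra.single n a) = n * a :=
  Finsupp.sum_single_index (by simp)

lemma single_eq (n : ℤ) (a : ℤ) : (AddMonoidAlgebra.single n a : LaurentPolynomial ℤ) = C a * T n :=
  single_eq_C_mul_T a n

lemma Q_singles_pos (n : ℤ) (h : 0 ≤ n) :
    Q n = AddMonoidAlgebra.single n 1 + AddMonoidAlgebra.single (-1 : ℤ) n - AddMonoidAlgebra.single 0 (n+1) := by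
  rw [Q, if_pos h, single_eq, single_eq, single_eq, map_one, one_mul, T_zero, mul_one]

lemma Q_singles_neg (n : ℤ) (h : ¬ 0 ≤ n) :
    Q n = AddMonoidAlgebra.single n 1 + AddMonoidAlgebra.single (1 : ℤ) (-n) - AddMonoidAlgebra.single 0 (1-n) := by
  rw [Q, if_neg h, single_eq, single_eq, single_eq, map_one, one_mul, T_zero, mul_one]

lemma evalOneHom_Q (n : ℤ) : evalOneHom (Q n) = 0 := by
  by_cases h : 0 ≤ n
  · rw [Q_singles_pos n h, map_sub, map_add, evalOneHom_single, evalOneHom_single,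
      evalOneHom_single]; ring
  · rw [Q_singles_neg n h, map_sub, map_add, evalOneHom_single, evalOneHom_single,
      evalOneHom_single]; ring

lemma derivOneHom_Q (n : ℤ) : derivOneHom (Q n) = 0 := by
  by_cases h : 0 ≤ n
  · rw [Q_singles_pos n h, map_sub, map_add, derivOneHom_single, derivOneHom_single,
      derivOneHom_single]; ring
  · rw [Q_singles_neg n h, map_sub, map_add, derivOneHom_single, derivOneHom_single,
      derivOneHom_single]; ring

lemma Q_apply_far (m n : ℤ) (h1 : n ≠ -1) (h0 : n ≠ 0) (hone : n ≠ 1) :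
    (Q m).coeff n = if m = n then 1 else 0 := by
  by_cases h : 0 ≤ m
  · rw [Q_singles_pos m h, AddMonoidAlgebra.coeff_sub, AddMonoidAlgebra.coeff_add,
      Finsupp.sub_apply, Finsupp.add_apply, AddMonoidAlgebra.coeff_single_apply,
      AddMonoidAlgebra.coeff_single_apply, AddMonoidAlgebra.coeff_single_apply]
    rw [if_neg (fun hc : (-1:ℤ) = n => h1 hc.symm), if_neg (fun hc : (0:ℤ) = n => h0 hc.symm)]
    simp
  · rw [Q_singles_neg m h, AddMonoidAlgebra.coeff_sub, AddMonoidAlgebra.coeff_add,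
      Finsupp.sub_apply, Finsupp.add_apply, AddMonoidAlgebra.coeff_single_apply,
      AddMonoidAlgebra.coeff_single_apply, AddMonoidAlgebra.coeff_single_apply]
    rw [if_neg (fun hc : (1:ℤ) = n => hone hc.symm), if_neg (fun hc : (0:ℤ) = n => h0 hc.symm)]
    simp

lemma Q_one : Q 1 = AddMonoidAlgebra.single (1 : ℤ) 1 + AddMonoidAlgebra.single (-1 : ℤ) 1
    - AddMonoidAlgebra.single (0 : ℤ) 2 := by
  rw [Q_singles_pos 1 (by norm_num)]
  norm_num

end Aux

/-- Every Laurent polynomial `f` with `f(1) = 0` and `f'(1) = 0` is realized as the graph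
polynomial of a disjoint union of the star graphs `Γ(L_k), Γ(L_k⁻¹), Γ(R_k), Γ(R_k⁻¹)`. -/
theorem realization_of_graphPolynomial (f : LaurentPolynomial ℤ)
    (h1 : evalOne f = 0) (h2 : derivOne f = 0) :
    ∃ l : List SDGraph,
      (∀ Γ ∈ l, ∃ k : ℕ, Γ = GammaL k ∨ Γ = GammaLinv k ∨ Γ = GammaR k ∨ Γ = GammaRinv k) ∧
      (l.foldr SDGraph.disjUnion SDGraph.empty).P = f := by
  classical
  set S : LaurentPolynomial ℤ := ∑ n ∈ f.coeff.support, (f.coeff n) • Q n with hS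
  set g : LaurentPolynomial ℤ := f - S with hg
  -- far coefficients of g vanish
  have hfar : ∀ n : ℤ, n ≠ -1 → n ≠ 0 → n ≠ 1 → g.coeff n = 0 := by
    intro n hm1 h0 h1
    have hSn : S.coeff n = f.coeff n := by
      rw [hS, AddMonoidAlgebra.coeff_sum, Finset.sum_apply']
      have : ∀ m ∈ f.coeff.support, (f.coeff m • Q m).coeff n = if m = n then f.coeff m else 0 := by
        intro m _
        rw [AddMonoidAlgebra.coeff_smul_apply, Q_apply_far m n hm1 h0 h1]
        simp [mul_ite]
      rw [Finset.sum_congr rfl this, Finset.sum_ite_eq' f.coeff.support n (fun m => f.coeff m)]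
      by_cases hn : n ∈ f.coeff.support
      · rw [if_pos hn]
      · rw [if_neg hn, eq_comm]
        exact Finsupp.notMem_support_iff.1 hn
    rw [hg, AddMonoidAlgebra.coeff_sub, Finsupp.sub_apply, hSn, sub_self]
  have hsupp : g.coeff.support ⊆ ({-1, 0, 1} : Finset ℤ) := by
    intro n hn
    by_contra hmem
    simp only [Finset.mem_insert, Finset.mem_singleton, not_or] at hmem
    exact Finsupp.mem_support_iff.1 hn (hfar n hmem.1 hmem.2.1 hmem.2.2)
  -- evaluate the two linear functionals on g
  have hSeval : evalOneHom S = 0 := by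
    rw [hS, map_sum]
    refine Finset.sum_eq_zero fun n _ => ?_
    rw [map_zsmul, evalOneHom_Q, smul_zero]
  have hSderiv : derivOneHom S = 0 := by
    rw [hS, map_sum]
    refine Finset.sum_eq_zero fun n _ => ?_
    rw [map_zsmul, derivOneHom_Q, smul_zero]
  have hgeval : evalOneHom g = 0 := by
    rw [hg, map_sub, hSeval, ← evalOne_eq, h1, sub_zero]
  have hgderiv : derivOneHom g = 0 := by
    rw [hg, map_sub, hSderiv, ← derivOne_eq, h2, sub_zero]
  have hsplit : ({-1, 0, 1} : Finset ℤ) = insert (-1) (insert 0 {1}) := rfl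
  have heval : g.coeff (-1) + g.coeff 0 + g.coeff 1 = 0 := by
    have : evalOneHom g = ∑ n ∈ ({-1, 0, 1} : Finset ℤ), g.coeff n := by
      rw [← evalOne_eq, evalOne]
      exact Finsupp.sum_of_support_subset _ hsupp _ (by simp)
    rw [this, hsplit, Finset.sum_insert (by norm_num), Finset.sum_insert (by norm_num),
      Finset.sum_singleton] at hgeval
    linarith
  have hderiv : -g.coeff (-1) + g.coeff 1 = 0 := by
    have : derivOneHom g = ∑ n ∈ ({-1, 0, 1} : Finset ℤ), n * g.coeff n := by
      rw [← derivOne_eq, derivOne]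
      exact Finsupp.sum_of_support_subset _ hsupp _ (by simp)
    rw [this, hsplit, Finset.sum_insert (by norm_num), Finset.sum_insert (by norm_num),
      Finset.sum_singleton] at hgderiv
    linarith
  clear_value S g
  -- hence g is a multiple of Q 1
  have hgQ : g = g.coeff 1 • Q 1 := by
    apply LaurentPolynomial.ext
    intro n
    rw [AddMonoidAlgebra.coeff_smul_apply, Q_one, AddMonoidAlgebra.coeff_sub, Finsupp.sub_apply,
      AddMonoidAlgebra.coeff_add, Finsupp.add_apply, AddMonoidAlgebra.coeff_single_apply,
      AddMonoidAlgebra.coeff_single_apply, AddMonoidAlgebra.coeff_single_apply]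
    by_cases hn1 : n = 1
    · subst hn1; norm_num
    · by_cases hnm1 : n = -1
      · subst hnm1; norm_num; linarith
      · by_cases hn0 : n = 0
        · subst hn0; norm_num; linarith
        · rw [hfar n hnm1 hn0 hn1]
          rw [if_neg (fun hc : (1:ℤ) = n => hn1 hc.symm),
            if_neg (fun hc : (-1:ℤ) = n => hnm1 hc.symm),
            if_neg (fun hc : (0:ℤ) = n => hn0 hc.symm)]
          simp
  have hf : f = S + g.coeff 1 • Q 1 := by rw [← hgQ, hg]; ring
  have hreal : Realizable f := by
    rw [hf, hS]
    exact (realizable_sum _ _ (fun n _ => realizable_zsmul_Q n (f.coeff n))).add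
      (realizable_zsmul_Q 1 (g.coeff 1))
  obtain ⟨l, hl, hp⟩ := hreal
  exact ⟨l, fun Γ h => hl Γ h, hp⟩
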